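/- Let (A,+) be an abelian group, t and s automorphisms of (A,+) (not assumed to commute), c₀ ∈ A, and define a*b = t(a) + s(b) + c₀ for a,b ∈ A. If * satisfies the identity F13, namely x*(y*(z*z)) = (x*y)*(z*z) for all x,y,z ∈ A, then t and s commute: t ∘ s = s ∘ t. -/
import Mathlib


/-- If the affine quasigroup `a * b = t(a) + s(b) + c₀` over an abelian group `A`
(with automorphisms `t`, `s` not assumed to commute) satisfies the identity F13,
`x(y(zz)) = (xy)(zz)`, then `t` and `s` commute. -/
theorem affine_F13_commute {A : Type*} [AddCommGroup A]
    (t s : A ≃+ A) (c₀ : A)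
    (op : A → A → A) (hop : ∀ a b : A, op a b = t a + s b + c₀)
    (hF13 : ∀ x y z : A, op x (op y (op z z)) = op (op x y) (op z z)) :
    ∀ a : A, t (s a) = s (t a) := by
  intro a
  have h := hF13 0 a 0
  have h0 := hF13 0 0 0
  simp only [hop, map_add, map_zero, zero_add] at h h0
  have h0' := add_right_cancel (add_right_cancel h0)
  have h' := add_right_cancel (add_right_cancel h)
  rw [h0'] at h'
  exact (add_right_cancel h').symm
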